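/- The Demazure operators on R = k[x_1,…,x_{n+1}] satisfy the braid relation ∂_i ∂_{i+1} ∂_i = ∂_{i+1} ∂_i ∂_{i+1}, and ∂_i ∂_j = ∂_j ∂_i for |i−j| ≥ 2. -/

import Mathlib

open MvPolynomial

section Aux

variable {m : ℕ} {k : Type*} [CommRing k]

/-- Multiplication by `X a - X b` (with `a ≠ b`) is injective in a multivariate
polynomial ring over any commutative ring. -/
lemma isLeftRegular_X_sub_X {a b : Fin m} (h : a ≠ b) :
    IsLeftRegular (X a - X b : MvPolynomial (Fin m) k) := by
  classical
  set φ : MvPolynomial (Fin m) k →ₐ[k] MvPolynomial (Fin m) k :=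
    aeval (fun v => if v = a then X a - X b else X v) with hφ
  set ψ : MvPolynomial (Fin m) k →ₐ[k] MvPolynomial (Fin m) k :=
    aeval (fun v => if v = a then X a + X b else X v) with hψ
  have hψφ : ψ.comp φ = AlgHom.id k _ := by
    apply algHom_ext
    intro v
    by_cases hv : v = a
    · subst hv
      simp [hφ, hψ, h.symm]
    · simp [hφ, hψ, hv]
  have hφψ : φ.comp ψ = AlgHom.id k _ := by
    apply algHom_ext
    intro v
    by_cases hv : v = a
    · subst hv
      simp [hφ, hψ, h.symm]
    · simp [hφ, hψ, hv]
  intro p q hpq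
  obtain ⟨p', rfl⟩ : ∃ p', φ p' = p := ⟨ψ p, by rw [← AlgHom.comp_apply, hφψ, AlgHom.id_apply]⟩
  obtain ⟨q', rfl⟩ : ∃ q', φ q' = q := ⟨ψ q, by rw [← AlgHom.comp_apply, hφψ, AlgHom.id_apply]⟩
  have hXa : φ (X a) = X a - X b := by simp [hφ]
  have h1 : φ (X a * p') = φ (X a * q') := by
    rw [map_mul, map_mul, hXa]
    exact hpq
  have hinj : Function.Injective φ := by
    intro x y hxy
    have := congrArg ψ hxy
    rwa [← AlgHom.comp_apply, ← AlgHom.comp_apply, hψφ, AlgHom.id_apply, AlgHom.id_apply] at this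
  have h2 : (X a : MvPolynomial (Fin m) k) * p' = X a * q' := hinj h1
  exact congrArg _ ((isRegular_X).left h2)

lemma rename_swap_swap (a b : Fin m) (p : MvPolynomial (Fin m) k) :
    rename (Equiv.swap a b) (rename (Equiv.swap a b) p) = p := by
  rw [rename_rename]
  have : (⇑(Equiv.swap a b) ∘ ⇑(Equiv.swap a b)) = id := by
    rw [← Equiv.Perm.coe_mul, Equiv.swap_mul_self, Equiv.Perm.coe_one]
  rw [this, rename_id, AlgHom.id_apply]

lemma rename_swap_braid {a b c : Fin m} (hab : a ≠ b) (hac : a ≠ c) (hbc : b ≠ c)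
    (p : MvPolynomial (Fin m) k) :
    rename (Equiv.swap b c) (rename (Equiv.swap a b) (rename (Equiv.swap b c) p)) =
      rename (Equiv.swap a b) (rename (Equiv.swap b c) (rename (Equiv.swap a b) p)) := by
  have h1 : Equiv.swap b c * Equiv.swap a b * Equiv.swap b c = Equiv.swap c a :=
    Equiv.swap_mul_swap_mul_swap hab hac
  have h2 : Equiv.swap a b * Equiv.swap b c * Equiv.swap a b = Equiv.swap a c := by
    rw [Equiv.swap_comm a b, Equiv.swap_comm b c]
    exact Equiv.swap_mul_swap_mul_swap hbc.symm hac.symm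
  have hfun : ((⇑(Equiv.swap b c) ∘ ⇑(Equiv.swap a b)) ∘ ⇑(Equiv.swap b c)) =
      ((⇑(Equiv.swap a b) ∘ ⇑(Equiv.swap b c)) ∘ ⇑(Equiv.swap a b)) := by
    rw [← Equiv.Perm.coe_mul, ← Equiv.Perm.coe_mul, ← Equiv.Perm.coe_mul,
      ← Equiv.Perm.coe_mul, h1, h2, Equiv.swap_comm]
  rw [rename_rename, rename_rename, rename_rename, rename_rename, hfun]

lemma rename_swap_comm {a b c d : Fin m} (hac : a ≠ c) (had : a ≠ d) (hbc : b ≠ c)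
    (hbd : b ≠ d) (p : MvPolynomial (Fin m) k) :
    rename (Equiv.swap c d) (rename (Equiv.swap a b) p) =
      rename (Equiv.swap a b) (rename (Equiv.swap c d) p) := by
  rw [rename_rename, rename_rename]
  have hd : (Equiv.swap a b).Disjoint (Equiv.swap c d) := by
    intro x
    by_cases hx : x = a ∨ x = b
    · right
      rcases hx with rfl | rfl
      · exact Equiv.swap_apply_of_ne_of_ne hac had
      · exact Equiv.swap_apply_of_ne_of_ne hbc hbd
    · left
      push_neg at hx
      exact Equiv.swap_apply_of_ne_of_ne hx.1 hx.2
  have hcomm : Equiv.swap c d * Equiv.swap a b = Equiv.swap a b * Equiv.swap c d :=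
    (hd.commute.symm).eq
  have : (⇑(Equiv.swap c d) ∘ ⇑(Equiv.swap a b)) = (⇑(Equiv.swap a b) ∘ ⇑(Equiv.swap c d)) := by
    rw [← Equiv.Perm.coe_mul, ← Equiv.Perm.coe_mul, hcomm]
  rw [this]

/-- Braid relation, abstract form with three distinct indices `a, b, c`. -/
lemma braid_aux {a b c : Fin m} (hab : a ≠ b) (hac : a ≠ c) (hbc : b ≠ c)
    (f g1 g2 g3 h1 h2 h3 : MvPolynomial (Fin m) k)
    (e1 : (X a - X b) * g1 = f - rename (Equiv.swap a b) f)
    (e2 : (X b - X c) * g2 = g1 - rename (Equiv.swap b c) g1)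
    (e3 : (X a - X b) * g3 = g2 - rename (Equiv.swap a b) g2)
    (d1 : (X b - X c) * h1 = f - rename (Equiv.swap b c) f)
    (d2 : (X a - X b) * h2 = h1 - rename (Equiv.swap a b) h1)
    (d3 : (X b - X c) * h3 = h2 - rename (Equiv.swap b c) h2) :
    g3 = h3 := by
  classical
  set sab := Equiv.swap a b with hsab
  set sbc := Equiv.swap b c with hsbc
  set A : MvPolynomial (Fin m) k := X a - X b with hA
  set B : MvPolynomial (Fin m) k := X b - X c with hB
  set C : MvPolynomial (Fin m) k := X a - X c with hC
  have hregA : IsLeftRegular A := isLeftRegular_X_sub_X hab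
  have hregB : IsLeftRegular B := isLeftRegular_X_sub_X hbc
  have hregC : IsLeftRegular C := isLeftRegular_X_sub_X hac
  -- renamed versions of the equations
  have E1i : (X b - X a) * rename sab g1 = rename sab f - f := by
    have t := congrArg (rename sab) e1
    rw [map_mul, map_sub, map_sub, rename_X, rename_X, Equiv.swap_apply_left,
      Equiv.swap_apply_right, rename_swap_swap] at t
    exact t
  have E1j : (X a - X c) * rename sbc g1 =
      rename sbc f - rename sbc (rename sab f) := by
    have t := congrArg (rename sbc) e1
    rw [map_mul, map_sub, map_sub, rename_X, rename_X, Equiv.swap_apply_left,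
      Equiv.swap_apply_of_ne_of_ne hab hac] at t
    exact t
  have E1ij : (X b - X c) * rename sab (rename sbc g1) =
      rename sab (rename sbc f) - rename sab (rename sbc (rename sab f)) := by
    have t := congrArg (rename sab) E1j
    rw [map_mul, map_sub, map_sub, rename_X, rename_X, Equiv.swap_apply_left,
      Equiv.swap_apply_of_ne_of_ne hac.symm hbc.symm] at t
    exact t
  have E2i : (X a - X c) * rename sab g2 =
      rename sab g1 - rename sab (rename sbc g1) := by
    have t := congrArg (rename sab) e2
    rw [map_mul, map_sub, map_sub, rename_X, rename_X, Equiv.swap_apply_right,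
      Equiv.swap_apply_of_ne_of_ne hac.symm hbc.symm] at t
    exact t
  have D1j : (X c - X b) * rename sbc h1 = rename sbc f - f := by
    have t := congrArg (rename sbc) d1
    rw [map_mul, map_sub, map_sub, rename_X, rename_X, Equiv.swap_apply_left,
      Equiv.swap_apply_right, rename_swap_swap] at t
    exact t
  have D1i : (X a - X c) * rename sab h1 =
      rename sab f - rename sab (rename sbc f) := by
    have t := congrArg (rename sab) d1
    rw [map_mul, map_sub, map_sub, rename_X, rename_X, Equiv.swap_apply_right,
      Equiv.swap_apply_of_ne_of_ne hac.symm hbc.symm] at t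
    exact t
  have D1ji : (X a - X b) * rename sbc (rename sab h1) =
      rename sbc (rename sab f) - rename sbc (rename sab (rename sbc f)) := by
    have t := congrArg (rename sbc) D1i
    rw [map_mul, map_sub, map_sub, rename_X, rename_X,
      Equiv.swap_apply_of_ne_of_ne hab hac, Equiv.swap_apply_right] at t
    exact t
  have D2j : (X a - X c) * rename sbc h2 =
      rename sbc h1 - rename sbc (rename sab h1) := by
    have t := congrArg (rename sbc) d2
    rw [map_mul, map_sub, map_sub, rename_X, rename_X,
      Equiv.swap_apply_of_ne_of_ne hab hac, Equiv.swap_apply_left] at t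
    exact t
  -- the symmetric expression
  set S : MvPolynomial (Fin m) k :=
    f - rename sab f - rename sbc f + rename sbc (rename sab f)
      + rename sab (rename sbc f) - rename sab (rename sbc (rename sab f)) with hS
  have key1 : A * ((A * B * C) * g3) = A * S := by
    rw [hA, hB, hC, hS]
    linear_combination (norm := (simp only [hA, hB, hC]; ring_nf))
      ((X a - X b) * (X b - X c) * (X a - X c)) * e3 + ((X a - X b) * (X a - X c)) * e2
      - ((X a - X b) * (X b - X c)) * E2i + (X a - X c) * e1 - (X a - X b) * E1j
      + (X b - X c) * E1i + (X a - X b) * E1ij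
  have hbraid : rename sbc (rename sab (rename sbc f)) =
      rename sab (rename sbc (rename sab f)) := by
    rw [hsab, hsbc]
    exact rename_swap_braid hab hac hbc f
  have key2 : B * ((A * B * C) * h3) = B * S := by
    rw [hA, hB, hC, hS, ← hbraid]
    linear_combination (norm := (simp only [hA, hB, hC]; ring_nf))
      ((X a - X b) * (X b - X c) * (X a - X c)) * d3 + ((X b - X c) * (X a - X c)) * d2
      - ((X b - X c) * (X a - X b)) * D2j + (X a - X c) * d1 - (X b - X c) * D1i
      + (X a - X b) * D1j + (X b - X c) * D1ji
  have k1 : (A * B * C) * g3 = S := hregA key1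
  have k2 : (A * B * C) * h3 = S := hregB key2
  exact ((hregA.mul hregB).mul hregC) (k1.trans k2.symm)

/-- Distant commutation, abstract form with four distinct indices. -/
lemma comm_aux {a b c d : Fin m} (hab : a ≠ b) (hcd : c ≠ d) (hac : a ≠ c) (had : a ≠ d)
    (hbc : b ≠ c) (hbd : b ≠ d)
    (f g1 g2 h1 h2 : MvPolynomial (Fin m) k)
    (e1 : (X a - X b) * g1 = f - rename (Equiv.swap a b) f)
    (e2 : (X c - X d) * g2 = g1 - rename (Equiv.swap c d) g1)
    (d1 : (X c - X d) * h1 = f - rename (Equiv.swap c d) f)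
    (d2 : (X a - X b) * h2 = h1 - rename (Equiv.swap a b) h1) :
    g2 = h2 := by
  classical
  set sab := Equiv.swap a b with hsab
  set scd := Equiv.swap c d with hscd
  have E1j : (X a - X b) * rename scd g1 = rename scd f - rename scd (rename sab f) := by
    have t := congrArg (rename scd) e1
    rw [map_mul, map_sub, map_sub, rename_X, rename_X,
      Equiv.swap_apply_of_ne_of_ne hac had, Equiv.swap_apply_of_ne_of_ne hbc hbd] at t
    exact t
  have D1i : (X c - X d) * rename sab h1 = rename sab f - rename sab (rename scd f) := by
    have t := congrArg (rename sab) d1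
    rw [map_mul, map_sub, map_sub, rename_X, rename_X,
      Equiv.swap_apply_of_ne_of_ne hac.symm hbc.symm,
      Equiv.swap_apply_of_ne_of_ne had.symm hbd.symm] at t
    exact t
  have hcomm : rename scd (rename sab f) = rename sab (rename scd f) := by
    rw [hsab, hscd]
    exact rename_swap_comm hac had hbc hbd f
  have key1 : (X a - X b) * ((X c - X d) * g2) =
      f - rename sab f - rename scd f + rename sab (rename scd f) := by
    rw [← hcomm]
    linear_combination (norm := ring_nf) (X a - X b) * e2 + e1 - E1j
  have key2 : (X a - X b) * ((X c - X d) * h2) =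
      f - rename sab f - rename scd f + rename sab (rename scd f) := by
    linear_combination (norm := ring_nf) (X c - X d) * d2 + d1 - D1i
  exact ((isLeftRegular_X_sub_X hab).mul (isLeftRegular_X_sub_X hcd))
    (by rw [← mul_assoc] at key1 key2; exact key1.trans key2.symm)

end Aux

/-- `DemRel i f g` says that `g = ∂_i f`, i.e. `(x_i − x_{i+1})·g = f − s_i f`. -/
def DemRel (n : ℕ) (k : Type*) [CommRing k] (i : Fin n)
    (f g : MvPolynomial (Fin (n + 1)) k) : Prop :=
  (X i.castSucc - X i.succ) * g = f - rename (Equiv.swap i.castSucc i.succ) f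

/-- The Demazure operators on `R = k[x_1,…,x_{n+1}]` satisfy the braid relation
`∂_i ∂_{i+1} ∂_i = ∂_{i+1} ∂_i ∂_{i+1}` and commute `∂_i ∂_j = ∂_j ∂_i` for `|i−j| ≥ 2`. -/
theorem demazure_braid_and_distant_commute (n : ℕ) (k : Type*) [CommRing k] :
    (∀ i j : Fin n, (j : ℕ) = (i : ℕ) + 1 →
      ∀ f g1 g2 g3 h1 h2 h3 : MvPolynomial (Fin (n + 1)) k,
        DemRel n k i f g1 → DemRel n k j g1 g2 → DemRel n k i g2 g3 →
        DemRel n k j f h1 → DemRel n k i h1 h2 → DemRel n k j h2 h3 →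
        g3 = h3) ∧
    (∀ i j : Fin n, ((i : ℕ) + 2 ≤ (j : ℕ) ∨ (j : ℕ) + 2 ≤ (i : ℕ)) →
      ∀ f g1 g2 h1 h2 : MvPolynomial (Fin (n + 1)) k,
        DemRel n k i f g1 → DemRel n k j g1 g2 →
        DemRel n k j f h1 → DemRel n k i h1 h2 →
        g2 = h2) := by
  constructor
  · intro i j hj f g1 g2 g3 h1 h2 h3 e1 e2 e3 d1 d2 d3
    unfold DemRel at e1 e2 e3 d1 d2 d3
    have hcs : j.castSucc = i.succ := by
      apply Fin.ext
      simp [hj]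
    rw [hcs] at e2 d1 d3
    have hab : i.castSucc ≠ i.succ := (Fin.castSucc_lt_succ (i := i)).ne
    have hac : i.castSucc ≠ j.succ := by
      apply Fin.ne_of_val_ne
      simp [hj]
      omega
    have hbc : i.succ ≠ j.succ := by
      apply Fin.ne_of_val_ne
      simp [hj]
    exact braid_aux hab hac hbc f g1 g2 g3 h1 h2 h3 e1 e2 e3 d1 d2 d3
  · intro i j hij f g1 g2 h1 h2 e1 e2 d1 d2
    unfold DemRel at e1 e2 d1 d2
    have hab : i.castSucc ≠ i.succ := (Fin.castSucc_lt_succ (i := i)).ne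
    have hcd : j.castSucc ≠ j.succ := (Fin.castSucc_lt_succ (i := j)).ne
    have hac : i.castSucc ≠ j.castSucc := by
      apply Fin.ne_of_val_ne
      simp
      omega
    have had : i.castSucc ≠ j.succ := by
      apply Fin.ne_of_val_ne
      simp
      omega
    have hbc : i.succ ≠ j.castSucc := by
      apply Fin.ne_of_val_ne
      simp
      omega
    have hbd : i.succ ≠ j.succ := by
      apply Fin.ne_of_val_ne
      simp
      omega
    exact comm_aux hab hcd hac had hbc hbd f g1 g2 h1 h2 e1 e2 d1 d2
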